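/- Let n ≥ 1 and let ε : Fin (2n) × Fin (2n) → ℂ be the standard symplectic form (ε(2k,2k+1) = 1, ε(2k+1,2k) = −1 for 0 ≤ k < n, and ε(i,j) = 0 otherwise). Let Ω : Fin (2n) × Fin (2n) × Fin (2n) × Fin (2n) → ℂ satisfy the quaternionic reality condition: conj(Ω(i,j,k,l)) = ∑_{i',j',k',l'} ε(i,i')·ε(j,j')·ε(k,k')·ε(l,l')·Ω(i',j',k',l') for all i,j,k,l. Then the Θ-contraction ∑_{a,b,c,d,e,f,g,h} Ω(a,b,c,d)·Ω(e,f,g,h)·ε(a,e)·ε(b,f)·ε(c,g)·ε(d,h) equals ∑_{i,j,k,l} |Ω(i,j,k,l)|², and in particular it is a nonnegative real number. (This is the pointwise statement, used in the paper, that the integrand of the Rozansky–Witten invariant b_Θ is the squared L²-norm of the curvature tensor, whence β_Θ > 0.) -/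

import Mathlib

/-- The standard symplectic form on `ℂ^{2n}`: `ε(2k, 2k+1) = 1`, `ε(2k+1, 2k) = −1`,
and `ε(i,j) = 0` otherwise. -/
noncomputable def eps (n : ℕ) (i j : Fin (2 * n)) : ℂ :=
  if (i : ℕ) % 2 = 0 ∧ (j : ℕ) = (i : ℕ) + 1 then 1
  else if (j : ℕ) % 2 = 0 ∧ (i : ℕ) = (j : ℕ) + 1 then -1
  else 0

/-- The Θ-contraction of a 4-tensor `Ω` satisfying the quaternionic reality condition
equals the sum of the squared absolute values of its entries; in particular it is a
nonnegative real number. This is the pointwise statement that the integrand of the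
Rozansky–Witten invariant `b_Θ` is the squared `L²`-norm of the curvature tensor. -/
theorem theta_contraction_is_norm_sq (n : ℕ) (hn : 1 ≤ n)
    (Om : Fin (2 * n) × Fin (2 * n) × Fin (2 * n) × Fin (2 * n) → ℂ)
    (hreal : ∀ i j k l : Fin (2 * n),
      (starRingEnd ℂ) (Om (i, j, k, l)) =
        ∑ i', ∑ j', ∑ k', ∑ l',
          eps n i i' * eps n j j' * eps n k k' * eps n l l' * Om (i', j', k', l')) :
    (∑ a, ∑ b, ∑ c, ∑ d, ∑ e, ∑ f, ∑ g, ∑ h,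
        Om (a, b, c, d) * Om (e, f, g, h) *
          eps n a e * eps n b f * eps n c g * eps n d h) =
      ((∑ i, ∑ j, ∑ k, ∑ l, ‖Om (i, j, k, l)‖ ^ 2 : ℝ) : ℂ) := by
  have key : ∀ a b c d : Fin (2 * n),
      (∑ e, ∑ f, ∑ g, ∑ h, Om (a, b, c, d) * Om (e, f, g, h) *
          eps n a e * eps n b f * eps n c g * eps n d h)
        = Om (a, b, c, d) * (starRingEnd ℂ) (Om (a, b, c, d)) := by
    intro a b c d
    rw [hreal]
    simp only [Finset.mul_sum]
    refine Finset.sum_congr rfl fun e _ => Finset.sum_congr rfl fun f _ =>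
      Finset.sum_congr rfl fun g _ => Finset.sum_congr rfl fun h _ => by ring
  simp_rw [key, Complex.mul_conj, ← Complex.sq_norm]
  push_cast
  ring
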